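/- The two-variable Laguerre polynomial is symmetric under simultaneous exchange of indices and variables: L_{n,m}(x,y) = L_{m,n}(y,x) for all nonnegative integers n, m and real x, y. -/

import Mathlib

noncomputable def L2 (n m : ℕ) (x y : ℝ) : ℝ :=
  ∑ i ∈ Finset.range (m+1), ∑ s ∈ Finset.range (n+1),
    ((-1:ℝ)^(i+s) / ((Nat.factorial i) * (Nat.factorial s))) *
      ((m+n).choose (m-i)) * ((n+i).choose (n-s)) * x^s * y^i

lemma aux_choose (a b c : ℕ) :
    ((a+b+c).choose a : ℝ) * ((b+c).choose b) = ((a+b+c).choose b : ℝ) * ((a+c).choose a) := by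
  rw [Nat.cast_choose ℝ (by omega : a ≤ a+b+c), Nat.cast_choose ℝ (by omega : b ≤ b+c),
    Nat.cast_choose ℝ (by omega : b ≤ a+b+c), Nat.cast_choose ℝ (by omega : a ≤ a+c)]
  have h1 : a+b+c-a = b+c := by omega
  have h2 : b+c-b = c := by omega
  have h3 : a+b+c-b = a+c := by omega
  have h4 : a+c-a = c := by omega
  rw [h1, h2, h3, h4]
  have f1 := (a+b+c).factorial_pos
  have f2 := (b+c).factorial_pos
  have f3 := (a+c).factorial_pos
  have f4 := a.factorial_pos
  have f5 := b.factorial_pos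
  have f6 := c.factorial_pos
  field_simp

theorem stmt1 (n m : ℕ) (x y : ℝ) : L2 n m x y = L2 m n y x := by
  unfold L2
  rw [Finset.sum_comm]
  apply Finset.sum_congr rfl
  intro s hs
  apply Finset.sum_congr rfl
  intro i hi
  simp only [Finset.mem_range] at hs hi
  have hs' : s ≤ n := by omega
  have hi' : i ≤ m := by omega
  have key : ((m+n).choose (m-i) : ℝ) * ((n+i).choose (n-s)) =
      ((m+n).choose (n-s) : ℝ) * ((m+s).choose (m-i)) := by
    have := aux_choose (m-i) (n-s) (i+s)
    have e1 : m-i+(n-s)+(i+s) = m+n := by omega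
    have e2 : n-s+(i+s) = n+i := by omega
    have e3 : m-i+(i+s) = m+s := by omega
    rw [e1, e2, e3] at this
    exact this
  have : (i+s) = (s+i) := by omega
  rw [this]
  rw [mul_assoc ((-1:ℝ)^(s+i) / _), key]
  ring_nf
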